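/- arXiv:1410.4888 — 2 statements merged into one kernel-verified Lean document; each statement's English description precedes it below -/
import Mathlib

section
/- Let g ∈ L¹(ℝ) ∩ L²(ℝ) and m ≥ 2 an integer. If the system {g_{k,j,m}(x) = m^{k/2} g(m^k x − j) : k ∈ ℕ₀, j ∈ ℤ} is orthonormal in L²(ℝ), then ĝ(0) = 0, i.e. ∫_ℝ g(x) dx = 0. -/
open MeasureTheory Real Complex

noncomputable def dilTrans (m : ℕ) (g : ℝ → ℂ) (k : ℕ) (j : ℤ) : ℝ → ℂ :=
  fun x => (Real.sqrt ((m : ℝ) ^ k) : ℂ) * g ((m : ℝ) ^ k * x - (j : ℝ))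

private lemma memLp_affine {a b : ℝ} (ha : a ≠ 0) {g : ℝ → ℂ}
    (hg2 : MemLp g 2 (volume : Measure ℝ)) :
    MemLp (fun x => g (a * x - b)) 2 (volume : Measure ℝ) := by
  have hmp : MeasurePreserving (fun x : ℝ => a * x - b) volume
      ((ENNReal.ofReal |a⁻¹|) • volume) := by
    constructor
    · exact (measurable_const_mul a).sub_const b
    · have : (fun x : ℝ => a * x - b) = (fun y => y - b) ∘ (fun x => a * x) := rfl
      rw [this, ← Measure.map_map (measurable_sub_const b) (measurable_const_mul a),
        Real.map_volume_mul_left ha, Measure.map_smul, map_sub_right_eq_self volume b]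
  exact (hg2.smul_measure (by simp)).comp_measurePreserving hmp

private lemma intervalIntegral_conj {g : ℝ → ℂ} {a b : ℝ} :
    ∫ y in a..b, (starRingEnd ℂ) (g y) = (starRingEnd ℂ) (∫ y in a..b, g y) := by
  rw [intervalIntegral, intervalIntegral, integral_conj, integral_conj, ← map_sub]

theorem stmt1 (m : ℕ) (hm : 2 ≤ m) (g : ℝ → ℂ)
    (hg1 : Integrable g (volume : Measure ℝ)) (hg2 : MemLp g 2 (volume : Measure ℝ))
    (horth : ∀ (k k' : ℕ) (j j' : ℤ),
      ∫ x : ℝ, dilTrans m g k j x * (starRingEnd ℂ) (dilTrans m g k' j' x)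
        = if k = k' ∧ j = j' then 1 else 0) :
    ∫ x : ℝ, g x = 0 := by
  by_contra hc0
  set c : ℂ := ∫ x : ℝ, g x with hc
  have hcpos : (0:ℝ) < ‖c‖ := norm_pos_iff.mpr hc0
  have hm0 : (0:ℝ) < (m:ℝ) := by positivity
  have hA0 : ∀ k : ℕ, (0:ℝ) < (m:ℝ)^k := fun k => pow_pos hm0 k
  have hmem : ∀ (k : ℕ) (j : ℤ), MemLp (dilTrans m g k j) 2 (volume : Measure ℝ) :=
    fun k j => (memLp_affine (hA0 k).ne' hg2).const_mul _
  set v : ℕ × ℤ → (ℝ →₂[volume] ℂ) := fun p => (hmem p.1 p.2).toLp _ with hv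
  have hcoe : ∀ p : ℕ × ℤ, (v p : ℝ → ℂ) =ᵐ[volume] dilTrans m g p.1 p.2 :=
    fun p => MemLp.coeFn_toLp _
  have horthn : Orthonormal ℂ v := by
    rw [orthonormal_iff_ite]
    intro p q
    rw [MeasureTheory.L2.inner_def]
    have h1 : ∀ᵐ a ∂(volume : Measure ℝ),
        (inner ℂ ((v p : ℝ → ℂ) a) ((v q : ℝ → ℂ) a) : ℂ)
          = dilTrans m g q.1 q.2 a * (starRingEnd ℂ) (dilTrans m g p.1 p.2 a) := by
      filter_upwards [hcoe p, hcoe q] with a h1 h2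
      simp [h1, h2, RCLike.inner_apply, mul_comm]
    rw [integral_congr_ae h1, horth q.1 p.1 q.2 p.2]
    by_cases h : p = q
    · simp [h]
    · have h2 : ¬ (q.1 = p.1 ∧ q.2 = p.2) := by
        intro hh; exact h (Prod.ext hh.1.symm hh.2.symm)
      simp [h, h2]
  have hvol : (volume : Measure ℝ) (Set.Ioc (0:ℝ) 1) ≠ ⊤ := by simp
  set f : (ℝ →₂[volume] ℂ) := indicatorConstLp 2 measurableSet_Ioc hvol (1:ℂ) with hf
  have hnf : ‖f‖ = 1 := by
    rw [hf, norm_indicatorConstLp (by norm_num) (by norm_num)]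
    simp
  -- inner products with f
  have key : ∀ (n : ℕ) (j : ℤ), ‖(inner ℂ (v (n, j)) f : ℂ)‖^2
      = ((m:ℝ)^n)⁻¹ * ‖∫ y in (-(j:ℝ))..((m:ℝ)^n - j), g y‖^2 := by
    intro n j
    set A : ℝ := (m:ℝ)^n with hA
    have hA0' : (0:ℝ) < A := hA0 n
    have h1 : (inner ℂ (v (n,j)) f : ℂ)
        = ∫ a, Set.indicator (Set.Ioc (0:ℝ) 1)
            (fun x => (starRingEnd ℂ) (dilTrans m g n j x)) a := by
      rw [MeasureTheory.L2.inner_def]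
      apply integral_congr_ae
      filter_upwards [hcoe (n,j), indicatorConstLp_coeFn (μ := (volume : Measure ℝ))
        (p := 2) (hs := measurableSet_Ioc) (hμs := hvol) (c := (1:ℂ))] with a ha hb
      rw [RCLike.inner_apply, ha, hb]
      by_cases hx : a ∈ Set.Ioc (0:ℝ) 1
      · simp [Set.indicator_of_mem hx]
      · simp [Set.indicator_of_notMem hx]
    rw [h1, integral_indicator measurableSet_Ioc,
      ← intervalIntegral.integral_of_le zero_le_one]
    have h2 : ∀ x : ℝ, (starRingEnd ℂ) (dilTrans m g n j x)
        = (Real.sqrt A : ℂ) * (fun y => (starRingEnd ℂ) (g y)) (A * x - j) := by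
      intro x
      simp [dilTrans, ← hA, map_mul, Complex.conj_ofReal]
    simp only [h2]
    rw [intervalIntegral.integral_const_mul,
      intervalIntegral.integral_comp_mul_sub (fun y => (starRingEnd ℂ) (g y)) hA0'.ne' (j:ℝ),
      intervalIntegral_conj]
    simp only [mul_zero, zero_sub, mul_one]
    rw [norm_mul, norm_smul, RCLike.norm_conj]
    rw [mul_pow, mul_pow]
    have e1 : ‖(Real.sqrt A : ℂ)‖^2 = A := by
      rw [Complex.norm_real, Real.norm_eq_abs, _root_.abs_of_nonneg (Real.sqrt_nonneg _),
        Real.sq_sqrt hA0'.le]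
    rw [e1]
    have e2 : ‖A⁻¹‖^2 = A⁻¹ * A⁻¹ := by
      rw [Real.norm_eq_abs, _root_.abs_of_nonneg (by positivity)]; ring
    rw [e2]
    field_simp
  -- tail estimate
  have htt : Filter.Tendsto (fun p : ℝ × ℝ => ∫ x in p.1..p.2, g x)
      (Filter.atBot ×ˢ Filter.atTop) (nhds c) :=
    intervalIntegral_tendsto_integral hg1 Filter.tendsto_fst Filter.tendsto_snd
  have hev : {p : ℝ × ℝ | (∫ x in p.1..p.2, g x) ∈ Metric.ball c (‖c‖/2)}
      ∈ Filter.atBot ×ˢ (Filter.atTop : Filter ℝ) :=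
    htt (Metric.ball_mem_nhds c (by positivity))
  obtain ⟨t₁, ht₁, t₂, ht₂, hsub⟩ := Filter.mem_prod_iff.mp hev
  obtain ⟨A₀, hA₀⟩ := Filter.mem_atBot_sets.mp ht₁
  obtain ⟨B₀, hB₀⟩ := Filter.mem_atTop_sets.mp ht₂
  set T : ℝ := max (-A₀) B₀ with hT
  have hTbound : ∀ a ≤ -T, ∀ b, T ≤ b → ‖(∫ x in a..b, g x) - c‖ < ‖c‖/2 := by
    intro a ha b hb
    have h1 : a ∈ t₁ := by
      apply hA₀ a
      have h0 : -A₀ ≤ T := by rw [hT]; exact le_max_left _ _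
      linarith
    have h2 : b ∈ t₂ := hB₀ b (le_trans (le_max_right _ _) hb)
    have := hsub (Set.mk_mem_prod h1 h2)
    simpa [Metric.mem_ball, dist_eq_norm] using this
  -- good j gives a lower bound
  have hgood : ∀ (n : ℕ) (j : ℤ), T ≤ (j:ℝ) → T ≤ (m:ℝ)^n - j →
      ((m:ℝ)^n)⁻¹ * (‖c‖/2)^2 ≤ ‖(inner ℂ (v (n, j)) f : ℂ)‖^2 := by
    intro n j h1 h2
    rw [key n j]
    have h3 : ‖(∫ y in (-(j:ℝ))..((m:ℝ)^n - j), g y) - c‖ < ‖c‖/2 :=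
      hTbound _ (by linarith) _ h2
    have h4 : ‖c‖/2 ≤ ‖∫ y in (-(j:ℝ))..((m:ℝ)^n - j), g y‖ := by
      have := norm_sub_norm_le (∫ y in (-(j:ℝ))..((m:ℝ)^n - j), g y) c
      have h5 := abs_le.mp (abs_norm_sub_norm_le (∫ y in (-(j:ℝ))..((m:ℝ)^n - j), g y) c)
      linarith [h5.1, h3]
    have h6 : (0:ℝ) < ((m:ℝ)^n)⁻¹ := by positivity
    have h7 : (‖c‖/2)^2 ≤ ‖∫ y in (-(j:ℝ))..((m:ℝ)^n - j), g y‖^2 := by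
      apply pow_le_pow_left₀ (by positivity) h4
    nlinarith
  -- integer threshold
  set Tz : ℤ := max ⌈T⌉ 0 with hTz
  have hTz0 : (0:ℤ) ≤ Tz := le_max_right _ _
  have hTzT : T ≤ (Tz:ℝ) := le_trans (Int.le_ceil T) (by exact_mod_cast le_max_left _ _)
  -- per-scale bound
  have hscale : ∀ n : ℕ, 4*Tz + 2 ≤ (m:ℤ)^n →
      ‖c‖^2/8 ≤ ∑ j ∈ Finset.Icc Tz ((m:ℤ)^n - Tz), ‖(inner ℂ (v (n, j)) f : ℂ)‖^2 := by
    intro n hMn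
    set M : ℤ := (m:ℤ)^n with hM
    have hMR : ((M:ℤ) : ℝ) = (m:ℝ)^n := by push_cast [hM]; ring
    have hterm : ∀ j ∈ Finset.Icc Tz (M - Tz),
        ((m:ℝ)^n)⁻¹ * (‖c‖/2)^2 ≤ ‖(inner ℂ (v (n, j)) f : ℂ)‖^2 := by
      intro j hj
      obtain ⟨hj1, hj2⟩ := Finset.mem_Icc.mp hj
      apply hgood
      · exact le_trans hTzT (by exact_mod_cast hj1)
      · have : (j:ℝ) ≤ (M:ℝ) - Tz := by exact_mod_cast hj2
        rw [← hMR]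
        linarith [hTzT]
    have hcard : (Finset.Icc Tz (M - Tz)).card = (M - 2*Tz + 1).toNat := by
      rw [Int.card_Icc]
      congr 1
      ring
    have hsum := Finset.card_nsmul_le_sum (Finset.Icc Tz (M - Tz)) _ _ hterm
    rw [hcard] at hsum
    have hMpos : (0:ℤ) < M := by linarith
    have hzz : ((M - 2*Tz + 1).toNat : ℤ) = M - 2*Tz + 1 := Int.toNat_of_nonneg (by linarith)
    have hcardR : ((M - 2*Tz + 1).toNat : ℝ) = (M:ℝ) - 2*(Tz:ℝ) + 1 := by
      calc ((M - 2*Tz + 1).toNat : ℝ) = (((M - 2*Tz + 1).toNat : ℤ) : ℝ) := by push_cast; ring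
        _ = ((M - 2*Tz + 1 : ℤ) : ℝ) := by rw [hzz]
        _ = (M:ℝ) - 2*(Tz:ℝ) + 1 := by push_cast; ring
    have h8 : ((M - 2*Tz + 1).toNat : ℝ) * (((m:ℝ)^n)⁻¹ * (‖c‖/2)^2)
        ≤ ∑ j ∈ Finset.Icc Tz (M - Tz), ‖(inner ℂ (v (n, j)) f : ℂ)‖^2 := by
      simpa [nsmul_eq_mul] using hsum
    have hMR2 : (0:ℝ) < (M:ℝ) := by exact_mod_cast hMpos
    have h9 : (M:ℝ)/2 ≤ (M:ℝ) - 2*(Tz:ℝ) + 1 := by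
      have : (4*(Tz:ℝ) + 2 : ℝ) ≤ (M:ℝ) := by exact_mod_cast hMn
      linarith
    have h10 : (M:ℝ)/2 * (((m:ℝ)^n)⁻¹ * (‖c‖/2)^2) = ‖c‖^2/8 := by
      rw [← hMR]
      field_simp
      ring
    calc ‖c‖^2/8 = (M:ℝ)/2 * (((m:ℝ)^n)⁻¹ * (‖c‖/2)^2) := h10.symm
      _ ≤ ((M - 2*Tz + 1).toNat : ℝ) * (((m:ℝ)^n)⁻¹ * (‖c‖/2)^2) := by
          apply mul_le_mul_of_nonneg_right (by rw [hcardR]; exact h9) (by positivity)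
      _ ≤ _ := h8
  -- threshold scale
  set n₀ : ℕ := (4*Tz + 2).toNat with hn₀
  have hbig : ∀ n : ℕ, n₀ ≤ n → 4*Tz + 2 ≤ (m:ℤ)^n := by
    intro n hn
    have h1 : (4*Tz + 2 : ℤ) = (n₀ : ℤ) := by
      rw [hn₀, Int.toNat_of_nonneg (by linarith)]
    have h2 : (n₀ : ℤ) ≤ (n : ℤ) := by exact_mod_cast hn
    have h3 : (n : ℤ) < (2:ℤ)^n := by exact_mod_cast (Nat.lt_two_pow_self (n := n))
    have h4 : ((2:ℤ))^n ≤ (m:ℤ)^n := by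
      apply pow_le_pow_left₀ (by norm_num)
      exact_mod_cast hm
    linarith
  -- assemble Bessel
  set N : ℕ := ⌈8 / ‖c‖^2⌉₊ with hN
  set s : Finset (ℕ × ℤ) := (Finset.Icc n₀ (n₀ + N)).biUnion
    (fun n => (Finset.Icc Tz ((m:ℤ)^n - Tz)).image (fun j => (n, j))) with hs
  have hdisj : (↑(Finset.Icc n₀ (n₀ + N)) : Set ℕ).PairwiseDisjoint
      (fun n => (Finset.Icc Tz ((m:ℤ)^n - Tz)).image (fun j => (n, j))) := by
    intro a _ b _ hab
    simp only [Function.onFun, Finset.disjoint_left]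
    intro p hp hq
    simp only [Finset.mem_image] at hp hq
    obtain ⟨j1, _, rfl⟩ := hp
    obtain ⟨j2, _, h⟩ := hq
    exact hab ((Prod.ext_iff.mp h).1.symm)
  have hbessel := horthn.sum_inner_products_le f (s := s)
  rw [hnf, one_pow] at hbessel
  have hsplit : ∑ p ∈ s, ‖(inner ℂ (v p) f : ℂ)‖^2
      = ∑ n ∈ Finset.Icc n₀ (n₀ + N), ∑ j ∈ Finset.Icc Tz ((m:ℤ)^n - Tz),
          ‖(inner ℂ (v (n, j)) f : ℂ)‖^2 := by
    rw [hs, Finset.sum_biUnion hdisj]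
    apply Finset.sum_congr rfl
    intro n _
    rw [Finset.sum_image]
    intro x _ y _ h
    exact (Prod.ext_iff.mp h).2
  have hlower : (N + 1 : ℝ) * (‖c‖^2/8) ≤ ∑ p ∈ s, ‖(inner ℂ (v p) f : ℂ)‖^2 := by
    rw [hsplit]
    have := Finset.card_nsmul_le_sum (Finset.Icc n₀ (n₀ + N))
      (fun n => ∑ j ∈ Finset.Icc Tz ((m:ℤ)^n - Tz), ‖(inner ℂ (v (n, j)) f : ℂ)‖^2)
      (‖c‖^2/8) (fun n hn => hscale n (hbig n (Finset.mem_Icc.mp hn).1))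
    rw [Nat.card_Icc] at this
    have hcc : n₀ + N + 1 - n₀ = N + 1 := by omega
    rw [hcc] at this
    simpa [nsmul_eq_mul, Nat.cast_add, Nat.cast_one] using this
  have hfin : (N + 1 : ℝ) * (‖c‖^2/8) ≤ 1 := le_trans hlower hbessel
  have hNge : (8 / ‖c‖^2 : ℝ) ≤ N := Nat.le_ceil _
  have hc2 : (0:ℝ) < ‖c‖^2 := by positivity
  have h8 : (8:ℝ) ≤ (N:ℝ) * ‖c‖^2 := by
    rw [div_le_iff₀ hc2] at hNge
    linarith
  nlinarith [hfin, h8, hc2]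
end

section
/- Let m ≥ 2 and let ξ be a locally integrable function on ℝ⁺ = [0,∞) such that ∫_{ℝ⁺} ξ(t) h^{(ν)}_{k,j,m}(t) dt = 0 for all k ∈ ℤ, j ∈ ℕ₀, 1 ≤ ν ≤ m−1, where h^{(ν)}_{k,j,m}(x) = m^{k/2} h^{(ν)}(m^k x − j) and {h^{(ν)}}_{ν=0}^{m−1} is an orthonormal basis of span{√m χ_{[l/m,(l+1)/m]} : 0 ≤ l ≤ m−1} with h^{(0)} = χ_{[0,1]}. Then ξ is almost everywhere equal to a constant on ℝ⁺. -/
open MeasureTheory Real Set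

noncomputable def dilZ (m : ℕ) (h : ℝ → ℝ) (k : ℤ) (j : ℕ) (x : ℝ) : ℝ :=
  Real.sqrt ((m : ℝ) ^ k) * h ((m : ℝ) ^ k * x - (j : ℝ))

open Filter Topology

noncomputable def stmtE (m : ℕ) (k : ℤ) (j : ℕ) : ℝ := (j : ℝ) / (m : ℝ) ^ k

lemma auxParMem (m : ℕ) (hm : 2 ≤ m) (k : ℤ) (j : ℕ) (x : ℝ) :
    x ∈ Icc (stmtE m k j) (stmtE m k (j+1)) ↔ (m:ℝ)^k * x - j ∈ Icc (0:ℝ) 1 := by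
  have hm0 : (0:ℝ) < m := by exact_mod_cast (by omega : 0 < m)
  have hP : (0:ℝ) < (m:ℝ)^k := zpow_pos hm0 k
  simp only [stmtE, mem_Icc, div_le_iff₀ hP, le_div_iff₀ hP]
  push_cast
  constructor <;> rintro ⟨h1, h2⟩ <;> constructor <;> nlinarith

lemma auxChildMem (m : ℕ) (hm : 2 ≤ m) (k : ℤ) (j l : ℕ) (x : ℝ) :
    x ∈ Ioo (stmtE m (k+1) (m*j+l)) (stmtE m (k+1) (m*j+l+1)) ↔
      (m:ℝ)^k * x - j ∈ Ioo ((l:ℝ)/m) (((l:ℝ)+1)/m) := by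
  have hm0 : (0:ℝ) < m := by exact_mod_cast (by omega : 0 < m)
  have hP : (0:ℝ) < (m:ℝ)^k := zpow_pos hm0 k
  have hQ : (m:ℝ)^(k+1) = (m:ℝ)^k * m := by
    rw [zpow_add_one₀ (ne_of_gt hm0)]
  simp only [stmtE, mem_Ioo, hQ, div_lt_iff₀ (by positivity : (0:ℝ) < (m:ℝ)^k * m),
    lt_div_iff₀ (by positivity : (0:ℝ) < (m:ℝ)^k * m), div_lt_iff₀ hm0, lt_div_iff₀ hm0]
  push_cast
  constructor <;> rintro ⟨h1, h2⟩ <;> constructor <;> nlinarith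

lemma auxUnitTile (m : ℕ) (hm : 2 ≤ m) (u : ℝ) (hu : u ∈ Icc (0:ℝ) 1)
    (hne : ∀ l : ℕ, l ≤ m → u ≠ (l:ℝ)/m) :
    ∃ l : ℕ, l < m ∧ u ∈ Ioo ((l:ℝ)/m) (((l:ℝ)+1)/m) := by
  have hm0 : (0:ℝ) < m := by exact_mod_cast (by omega : 0 < m)
  have hu0 : 0 < u := by
    rcases hu.1.lt_or_eq with h | h
    · exact h
    · exact absurd (by simp [← h]) (hne 0 (by omega))
  have hu1 : u < 1 := by
    rcases hu.2.lt_or_eq with h | h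
    · exact h
    · refine absurd ?_ (hne m le_rfl)
      rw [h]; field_simp
  set n : ℤ := ⌊u * m⌋ with hn
  have hn0 : 0 ≤ n := Int.floor_nonneg.2 (by positivity)
  set l : ℕ := n.toNat with hl
  have hlcast : (l:ℝ) = (n:ℝ) := by
    rw [hl]; exact_mod_cast congrArg (Int.cast : ℤ → ℝ) (Int.toNat_of_nonneg hn0)
  have hfl : (n:ℝ) ≤ u * m := Int.floor_le _
  have hfu : u * m < n + 1 := Int.lt_floor_add_one _
  have hlm : l < m := by
    have : (n:ℝ) < m := lt_of_le_of_lt hfl (by nlinarith)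
    have : (l:ℝ) < m := by rw [hlcast]; exact this
    exact_mod_cast this
  have hne' : u * m ≠ l := by
    intro hh
    exact hne l (le_of_lt hlm) (by rw [eq_div_iff (ne_of_gt hm0)]; exact hh)
  refine ⟨l, hlm, ?_, ?_⟩
  · rw [div_lt_iff₀ hm0]
    exact lt_of_le_of_ne (by rw [hlcast]; exact hfl) (Ne.symm hne')
  · rw [lt_div_iff₀ hm0]
    rw [hlcast]; linarith

lemma auxLen (m : ℕ) (hm : 2 ≤ m) (k : ℤ) (j : ℕ) :
    stmtE m k (j+1) - stmtE m k j = ((m:ℝ)^k)⁻¹ := by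
  unfold stmtE
  push_cast
  rw [div_sub_div_same, show ((j:ℝ) + 1 - j) = 1 by ring, one_div]

lemma auxEnonneg (m : ℕ) (hm : 2 ≤ m) (k : ℤ) (j : ℕ) : 0 ≤ stmtE m k j := by
  have hm0 : (0:ℝ) < m := by exact_mod_cast (by omega : 0 < m)
  unfold stmtE; positivity

lemma auxTileAe (m : ℕ) (hm : 2 ≤ m) (k : ℤ) (j : ℕ) :
    (Icc (stmtE m k j) (stmtE m k (j+1)) : Set ℝ) =ᵐ[volume]
      ⋃ l ∈ Finset.range m, Ioo (stmtE m (k+1) (m*j+l)) (stmtE m (k+1) (m*j+l+1)) := by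
  have hm0 : (0:ℝ) < m := by exact_mod_cast (by omega : 0 < m)
  have hP : (0:ℝ) < (m:ℝ)^k := zpow_pos hm0 k
  rw [MeasureTheory.ae_eq_set]
  constructor
  · apply measure_mono_null
      (?_ : _ ⊆ ⋃ l ∈ Finset.range (m+1), ({((j:ℝ) + (l:ℝ)/m)/(m:ℝ)^k} : Set ℝ))
    · refine Set.Countable.measure_zero ?_ _
      exact Set.countable_iUnion fun l => Set.countable_iUnion fun _ => countable_singleton _
    · rintro x ⟨hx, hnx⟩
      have hu : (m:ℝ)^k * x - j ∈ Icc (0:ℝ) 1 := (auxParMem m hm k j x).1 hx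
      have hex : ∃ l : ℕ, l ≤ m ∧ (m:ℝ)^k * x - j = (l:ℝ)/m := by
        by_contra hall
        push_neg at hall
        obtain ⟨l, hlm, hmem⟩ := auxUnitTile m hm _ hu (fun l hl => hall l hl)
        exact hnx (Set.mem_biUnion (Finset.mem_range.2 hlm)
          ((auxChildMem m hm k j l x).2 hmem))
      obtain ⟨l, hlm, heq⟩ := hex
      have hx' : x = ((j:ℝ) + (l:ℝ)/m)/(m:ℝ)^k := by
        rw [eq_div_iff (ne_of_gt hP)]; linarith
      refine Set.mem_biUnion (Finset.mem_range.2 (show l < m + 1 by omega))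
        (show x ∈ ({((j:ℝ) + (l:ℝ)/m)/(m:ℝ)^k} : Set ℝ) from by simp [hx'])
  · have hsub : (⋃ l ∈ Finset.range m, Ioo (stmtE m (k+1) (m*j+l)) (stmtE m (k+1) (m*j+l+1)))
        ⊆ Icc (stmtE m k j) (stmtE m k (j+1)) := by
      intro x hx
      simp only [Set.mem_iUnion, exists_prop] at hx
      obtain ⟨l, hl, hx⟩ := hx
      have hl' : l < m := Finset.mem_range.1 hl
      have hu := (auxChildMem m hm k j l x).1 hx
      refine (auxParMem m hm k j x).2 ⟨?_, ?_⟩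
      · have : (0:ℝ) ≤ (l:ℝ)/m := by positivity
        linarith [hu.1]
      · have hl1 : ((l:ℝ)+1)/m ≤ 1 := by
          rw [div_le_one hm0]
          exact_mod_cast Nat.succ_le_of_lt hl'
        linarith [hu.2]
    rw [Set.diff_eq_empty.2 hsub]
    exact measure_empty

noncomputable def stmtA (m : ℕ) (ξ : ℝ → ℝ) (k : ℤ) (j : ℕ) : ℝ :=
  ∫ t in Ioo (stmtE m k j) (stmtE m k (j+1)), ξ t

noncomputable def stmtC (m : ℕ) (h : ℕ → ℝ → ℝ) (ν l : ℕ) : ℝ :=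
  h ν ((2*(l:ℝ)+1)/(2*(m:ℝ)))


theorem stmt19 (m : ℕ) (hm : 2 ≤ m)
    (h : ℕ → ℝ → ℝ)
    (h0 : ∀ x, h 0 x = Set.indicator (Icc (0:ℝ) 1) (fun _ => (1:ℝ)) x)
    (horth : ∀ ν < m, ∀ ν' < m,
      (∫ x in Icc (0:ℝ) 1, h ν x * h ν' x) = if ν = ν' then 1 else 0)
    (hsupp : ∀ ν < m, ∀ x, x ∉ Icc (0:ℝ) 1 → h ν x = 0)
    (hconst : ∀ ν < m, ∀ l < m, ∀ x ∈ Ioo ((l : ℝ) / m) (((l : ℝ) + 1) / m),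
        ∀ y ∈ Ioo ((l : ℝ) / m) (((l : ℝ) + 1) / m), h ν x = h ν y)
    (ξ : ℝ → ℝ) (hξ : LocallyIntegrableOn ξ (Ici (0:ℝ)) volume)
    (hint : ∀ (k : ℤ) (j : ℕ) (ν : ℕ), 1 ≤ ν → ν < m →
      IntegrableOn (fun t => ξ t * dilZ m (h ν) k j t) (Ici (0:ℝ)) volume)
    (horthξ : ∀ (k : ℤ) (j : ℕ) (ν : ℕ), 1 ≤ ν → ν < m →
      (∫ t in Ici (0:ℝ), ξ t * dilZ m (h ν) k j t) = 0) :
    ∃ c : ℝ, ∀ᵐ t ∂(volume.restrict (Ici (0:ℝ))), ξ t = c := by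
  classical
  have hmnat : 0 < m := by omega
  have hm0 : (0:ℝ) < m := by exact_mod_cast hmnat
  have hmne : (m:ℝ) ≠ 0 := ne_of_gt hm0
  have hPz : ∀ k : ℤ, (0:ℝ) < (m:ℝ)^k := fun k => zpow_pos hm0 k
  -- value of h ν on the l-th subinterval
  have hmid : ∀ l, l < m → (2*(l:ℝ)+1)/(2*(m:ℝ)) ∈ Ioo ((l:ℝ)/m) (((l:ℝ)+1)/m) := by
    intro l hl
    constructor <;> rw [div_lt_div_iff₀ (by positivity) (by positivity)] <;> nlinarith
  have hc : ∀ ν, ν < m → ∀ l, l < m → ∀ x ∈ Ioo ((l:ℝ)/m) (((l:ℝ)+1)/m),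
      h ν x = stmtC m h ν l := by
    intro ν hν l hl x hx
    exact hconst ν hν l hl x hx _ (hmid l hl)
  have hc0 : ∀ l, l < m → stmtC m h 0 l = 1 := by
    intro l hl
    unfold stmtC
    rw [h0, indicator_of_mem]
    constructor
    · positivity
    · rw [div_le_one (by positivity)]
      have : (l:ℝ) + 1 ≤ m := by exact_mod_cast Nat.succ_le_of_lt hl
      linarith
  have hAint : ∀ (k : ℤ) (j : ℕ),
      IntegrableOn ξ (Ioo (stmtE m k j) (stmtE m k (j+1))) volume := by
    intro k j
    refine (hξ.integrableOn_compact_subset ?_ isCompact_Icc).mono_set Ioo_subset_Icc_self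
    intro x hx
    exact le_trans (auxEnonneg m hm k j) hx.1
  have hdisj : ∀ (k : ℤ) (j : ℕ), Set.Pairwise ↑(Finset.range m)
      (Function.onFun Disjoint fun l => Ioo (stmtE m (k+1) (m*j+l)) (stmtE m (k+1) (m*j+l+1))) := by
    intro k j
    intro l _ l' _ hne
    simp only [Function.onFun]
    apply Set.disjoint_left.2
    intro x hx hx'
    have h1 := (auxChildMem m hm k j l x).1 hx
    have h2 := (auxChildMem m hm k j l' x).1 hx'
    simp only [mem_Ioo] at h1 h2
    rcases lt_or_gt_of_ne hne with hlt | hlt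
    · have hle : ((l:ℝ)+1) ≤ (l':ℝ) := by exact_mod_cast Nat.succ_le_of_lt hlt
      have : ((l:ℝ)+1)/m ≤ (l':ℝ)/m := by gcongr
      linarith [h1.2, h2.1]
    · have hle : ((l':ℝ)+1) ≤ (l:ℝ) := by exact_mod_cast Nat.succ_le_of_lt hlt
      have : ((l':ℝ)+1)/m ≤ (l:ℝ)/m := by gcongr
      linarith [h2.2, h1.1]
  have sumA : ∀ (k : ℤ) (j : ℕ),
      stmtA m ξ k j = ∑ l ∈ Finset.range m, stmtA m ξ (k+1) (m*j+l) := by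
    intro k j
    calc stmtA m ξ k j = ∫ t in Icc (stmtE m k j) (stmtE m k (j+1)), ξ t :=
          setIntegral_congr_set Ioo_ae_eq_Icc
      _ = ∫ t in ⋃ l ∈ Finset.range m,
            Ioo (stmtE m (k+1) (m*j+l)) (stmtE m (k+1) (m*j+l+1)), ξ t :=
          setIntegral_congr_set (auxTileAe m hm k j)
      _ = ∑ l ∈ Finset.range m, stmtA m ξ (k+1) (m*j+l) :=
          integral_biUnion_finset _ (fun _ _ => measurableSet_Ioo) (hdisj k j)
            (fun l _ => hAint _ _)
  have coef : ∀ ν, 1 ≤ ν → ν < m → ∀ (k : ℤ) (j : ℕ),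
      ∑ l ∈ Finset.range m, stmtC m h ν l * stmtA m ξ (k+1) (m*j+l) = 0 := by
    intro ν h1ν hνm k j
    have hsq : (0:ℝ) < Real.sqrt ((m:ℝ)^k) := Real.sqrt_pos.2 (hPz k)
    have hIccIci : Icc (stmtE m k j) (stmtE m k (j+1)) ⊆ Ici (0:ℝ) := by
      intro x hx
      exact le_trans (auxEnonneg m hm k j) hx.1
    have hloc : ∀ l ∈ Finset.range m,
        IntegrableOn (fun t => ξ t * dilZ m (h ν) k j t)
          (Ioo (stmtE m (k+1) (m*j+l)) (stmtE m (k+1) (m*j+l+1))) volume := by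
      intro l hl
      have hl' : l < m := Finset.mem_range.1 hl
      refine MeasureTheory.IntegrableOn.congr_fun
        (((hAint (k+1) (m*j+l)).const_mul
          (Real.sqrt ((m:ℝ)^k) * stmtC m h ν l)) : IntegrableOn _ _ _)
        ?_ measurableSet_Ioo
      intro t ht
      have hu := (auxChildMem m hm k j l t).1 ht
      simp only [dilZ]
      rw [hc ν hνm l hl' _ hu]
      ring
    have key : (∫ t in Ici (0:ℝ), ξ t * dilZ m (h ν) k j t)
        = Real.sqrt ((m:ℝ)^k) *
          ∑ l ∈ Finset.range m, stmtC m h ν l * stmtA m ξ (k+1) (m*j+l) := by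
      calc (∫ t in Ici (0:ℝ), ξ t * dilZ m (h ν) k j t)
          = ∫ t in Icc (stmtE m k j) (stmtE m k (j+1)), ξ t * dilZ m (h ν) k j t := by
            refine setIntegral_eq_of_subset_of_forall_diff_eq_zero
              measurableSet_Ici hIccIci ?_
            intro x hx
            have hnm : (m:ℝ)^k * x - j ∉ Icc (0:ℝ) 1 :=
              fun hmem => hx.2 ((auxParMem m hm k j x).2 hmem)
            simp [dilZ, hsupp ν hνm _ hnm]
        _ = ∫ t in ⋃ l ∈ Finset.range m,
              Ioo (stmtE m (k+1) (m*j+l)) (stmtE m (k+1) (m*j+l+1)),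
              ξ t * dilZ m (h ν) k j t :=
            setIntegral_congr_set (auxTileAe m hm k j)
        _ = ∑ l ∈ Finset.range m, ∫ t in
              Ioo (stmtE m (k+1) (m*j+l)) (stmtE m (k+1) (m*j+l+1)),
              ξ t * dilZ m (h ν) k j t :=
            integral_biUnion_finset _ (fun _ _ => measurableSet_Ioo) (hdisj k j) hloc
        _ = ∑ l ∈ Finset.range m,
              Real.sqrt ((m:ℝ)^k) * (stmtC m h ν l * stmtA m ξ (k+1) (m*j+l)) := by
            refine Finset.sum_congr rfl fun l hl => ?_
            have hl' : l < m := Finset.mem_range.1 hl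
            rw [show (∫ t in Ioo (stmtE m (k+1) (m*j+l)) (stmtE m (k+1) (m*j+l+1)),
                ξ t * dilZ m (h ν) k j t)
              = ∫ t in Ioo (stmtE m (k+1) (m*j+l)) (stmtE m (k+1) (m*j+l+1)),
                (Real.sqrt ((m:ℝ)^k) * stmtC m h ν l) * ξ t from
              setIntegral_congr_fun measurableSet_Ioo fun t ht => by
                have hu := (auxChildMem m hm k j l t).1 ht
                simp only [dilZ]
                rw [hc ν hνm l hl' _ hu]
                ring]
            rw [MeasureTheory.integral_const_mul]
            unfold stmtA
            ring
        _ = Real.sqrt ((m:ℝ)^k) *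
              ∑ l ∈ Finset.range m, stmtC m h ν l * stmtA m ξ (k+1) (m*j+l) := by
            rw [Finset.mul_sum]
    rw [horthξ k j ν h1ν hνm] at key
    exact ((mul_eq_zero.1 key.symm).resolve_left (ne_of_gt hsq))
  have rowor : ∀ ν, ν < m → ∀ ν', ν' < m →
      ∑ l ∈ Finset.range m, stmtC m h ν l * stmtC m h ν' l
        = (m:ℝ) * (if ν = ν' then 1 else 0) := by
    intro ν hν ν' hν'
    have h01 : (Icc (0:ℝ) 1) = Icc (stmtE m 0 0) (stmtE m 0 (0+1)) := by
      unfold stmtE; norm_num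
    have hchild : ∀ l, l < m → ∀ x ∈ Ioo (stmtE m (0+1) (m*0+l)) (stmtE m (0+1) (m*0+l+1)),
        x ∈ Ioo ((l:ℝ)/m) (((l:ℝ)+1)/m) := by
      intro l hl x hx
      have hu := (auxChildMem m hm 0 0 l x).1 hx
      simpa using hu
    have hint2 : ∀ l ∈ Finset.range m,
        IntegrableOn (fun x => h ν x * h ν' x)
          (Ioo (stmtE m (0+1) (m*0+l)) (stmtE m (0+1) (m*0+l+1))) volume := by
      intro l hl
      have hl' : l < m := Finset.mem_range.1 hl
      refine MeasureTheory.IntegrableOn.congr_fun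
        ((integrableOn_const measure_Ioo_lt_top.ne) : IntegrableOn
          (fun _ => stmtC m h ν l * stmtC m h ν' l) _ _) ?_ measurableSet_Ioo
      intro x hx
      have hx' := hchild l hl' x hx
      show stmtC m h ν l * stmtC m h ν' l = h ν x * h ν' x
      rw [hc ν hν l hl' x hx', hc ν' hν' l hl' x hx']
    have hvol : ∀ l : ℕ, (volume (Ioo (stmtE m (0+1) (m*0+l))
        (stmtE m (0+1) (m*0+l+1)))).toReal = (m:ℝ)⁻¹ := by
      intro l
      rw [Real.volume_Ioo, auxLen m hm (0+1) (m*0+l), ENNReal.toReal_ofReal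
        (le_of_lt (inv_pos.2 (hPz (0+1))))]
      norm_num
    have key : (if ν = ν' then (1:ℝ) else 0)
        = ∑ l ∈ Finset.range m, stmtC m h ν l * stmtC m h ν' l * (m:ℝ)⁻¹ := by
      rw [← horth ν hν ν' hν']
      calc (∫ x in Icc (0:ℝ) 1, h ν x * h ν' x)
          = ∫ x in Icc (stmtE m 0 0) (stmtE m 0 (0+1)), h ν x * h ν' x := by rw [← h01]
        _ = ∫ x in ⋃ l ∈ Finset.range m,
              Ioo (stmtE m (0+1) (m*0+l)) (stmtE m (0+1) (m*0+l+1)), h ν x * h ν' x :=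
            setIntegral_congr_set (auxTileAe m hm 0 0)
        _ = ∑ l ∈ Finset.range m, ∫ x in
              Ioo (stmtE m (0+1) (m*0+l)) (stmtE m (0+1) (m*0+l+1)), h ν x * h ν' x :=
            integral_biUnion_finset _ (fun _ _ => measurableSet_Ioo) (hdisj 0 0) hint2
        _ = ∑ l ∈ Finset.range m, stmtC m h ν l * stmtC m h ν' l * (m:ℝ)⁻¹ := by
            refine Finset.sum_congr rfl fun l hl => ?_
            have hl' : l < m := Finset.mem_range.1 hl
            rw [setIntegral_congr_fun measurableSet_Ioo
              (fun x hx => by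
                show h ν x * h ν' x = stmtC m h ν l * stmtC m h ν' l
                rw [hc ν hν l hl' x (hchild l hl' x hx), hc ν' hν' l hl' x (hchild l hl' x hx)] :
                EqOn (fun x => h ν x * h ν' x)
                  (fun _ => stmtC m h ν l * stmtC m h ν' l) _)]
            rw [setIntegral_const, measureReal_def, hvol l, smul_eq_mul, mul_comm]
    rw [key, ← Finset.sum_mul]
    field_simp
  have color : ∀ l, l < m → ∀ l', l' < m →
      ∑ ν ∈ Finset.range m, stmtC m h ν l * stmtC m h ν l'
        = (m:ℝ) * (if l = l' then 1 else 0) := by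
    set Mx : Matrix (Fin m) (Fin m) ℝ := Matrix.of fun ν l => stmtC m h ν l with hMx
    have hMMT : Mx * (Matrix.transpose Mx) = (m:ℝ) • (1 : Matrix (Fin m) (Fin m) ℝ) := by
      ext ν ν'
      simp only [Matrix.mul_apply, Matrix.transpose_apply, hMx, Matrix.of_apply,
        Matrix.smul_apply, Matrix.one_apply, smul_eq_mul]
      rw [Fin.sum_univ_eq_sum_range (fun l => stmtC m h ν l * stmtC m h ν' l),
        rowor ν ν.2 ν' ν'.2]
      by_cases hh : ν = ν'
      · rw [if_pos hh, if_pos (by exact_mod_cast congrArg Fin.val hh)]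
      · rw [if_neg hh, if_neg (fun hc => hh (Fin.val_injective hc))]
    have h1 : Mx * ((m:ℝ)⁻¹ • (Matrix.transpose Mx)) = 1 := by
      rw [Matrix.mul_smul, hMMT, smul_smul, inv_mul_cancel₀ hmne, one_smul]
    have h2 : ((m:ℝ)⁻¹ • (Matrix.transpose Mx)) * Mx = 1 := mul_eq_one_comm.1 h1
    intro l hl l' hl'
    have h3 : (((m:ℝ)⁻¹ • (Matrix.transpose Mx)) * Mx) ⟨l, hl⟩ ⟨l', hl'⟩
        = (1 : Matrix (Fin m) (Fin m) ℝ) ⟨l, hl⟩ ⟨l', hl'⟩ := by rw [h2]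
    simp only [Matrix.mul_apply, Matrix.smul_apply, Matrix.transpose_apply, hMx,
      Matrix.of_apply, Matrix.one_apply, smul_eq_mul] at h3
    rw [Fin.sum_univ_eq_sum_range
      (fun ν => (m:ℝ)⁻¹ * stmtC m h ν l * stmtC m h ν l')] at h3
    have h4 : ∑ ν ∈ Finset.range m, (m:ℝ)⁻¹ * stmtC m h ν l * stmtC m h ν l'
        = (m:ℝ)⁻¹ * ∑ ν ∈ Finset.range m, stmtC m h ν l * stmtC m h ν l' := by
      rw [Finset.mul_sum]
      exact Finset.sum_congr rfl fun ν _ => by ring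
    rw [h4] at h3
    have h5 : ((⟨l, hl⟩ : Fin m) = ⟨l', hl'⟩) ↔ l = l' := by
      simp [Fin.ext_iff]
    by_cases hll : l = l'
    · rw [if_pos (h5.2 hll)] at h3
      rw [if_pos hll]
      field_simp at h3 ⊢
      linarith
    · rw [if_neg (fun hc => hll (h5.1 hc))] at h3
      rw [if_neg hll]
      have := mul_eq_zero.1 h3
      rcases this with hc | hc
      · exact absurd hc (inv_ne_zero hmne)
      · rw [hc]; ring
  have childavg : ∀ (k : ℤ) (j : ℕ) (l : ℕ), l < m →
      stmtA m ξ (k+1) (m*j+l) = stmtA m ξ k j / m := by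
    intro k j l hl
    have hlmem : l ∈ Finset.range m := Finset.mem_range.2 hl
    have e1 : ∑ l' ∈ Finset.range m,
        (∑ ν ∈ Finset.range m, stmtC m h ν l * stmtC m h ν l') * stmtA m ξ (k+1) (m*j+l')
        = (m:ℝ) * stmtA m ξ (k+1) (m*j+l) := by
      rw [Finset.sum_congr rfl (fun l' hl' => by
        rw [color l hl l' (Finset.mem_range.1 hl')])]
      rw [Finset.sum_eq_single l]
      · rw [if_pos rfl]; ring
      · intro l' _ hne
        rw [if_neg (fun hc => hne hc.symm)]
        ring
      · intro hc; exact absurd hlmem hc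
    have e2 : ∑ l' ∈ Finset.range m,
        (∑ ν ∈ Finset.range m, stmtC m h ν l * stmtC m h ν l') * stmtA m ξ (k+1) (m*j+l')
        = ∑ ν ∈ Finset.range m, stmtC m h ν l *
            (∑ l' ∈ Finset.range m, stmtC m h ν l' * stmtA m ξ (k+1) (m*j+l')) := by
      calc ∑ l' ∈ Finset.range m,
          (∑ ν ∈ Finset.range m, stmtC m h ν l * stmtC m h ν l') * stmtA m ξ (k+1) (m*j+l')
          = ∑ l' ∈ Finset.range m, ∑ ν ∈ Finset.range m,
              stmtC m h ν l * stmtC m h ν l' * stmtA m ξ (k+1) (m*j+l') := by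
            exact Finset.sum_congr rfl fun l' _ => by rw [Finset.sum_mul]
        _ = ∑ ν ∈ Finset.range m, ∑ l' ∈ Finset.range m,
              stmtC m h ν l * stmtC m h ν l' * stmtA m ξ (k+1) (m*j+l') :=
            Finset.sum_comm
        _ = ∑ ν ∈ Finset.range m, stmtC m h ν l *
              (∑ l' ∈ Finset.range m, stmtC m h ν l' * stmtA m ξ (k+1) (m*j+l')) := by
            refine Finset.sum_congr rfl fun ν _ => ?_
            rw [Finset.mul_sum]
            exact Finset.sum_congr rfl fun l' _ => by ring
    have e3 : ∑ ν ∈ Finset.range m, stmtC m h ν l *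
        (∑ l' ∈ Finset.range m, stmtC m h ν l' * stmtA m ξ (k+1) (m*j+l'))
        = stmtA m ξ k j := by
      rw [Finset.sum_eq_single 0]
      · rw [hc0 l hl, one_mul]
        rw [show (∑ l' ∈ Finset.range m, stmtC m h 0 l' * stmtA m ξ (k+1) (m*j+l'))
            = ∑ l' ∈ Finset.range m, stmtA m ξ (k+1) (m*j+l') from
          Finset.sum_congr rfl fun l' hl' => by
            rw [hc0 l' (Finset.mem_range.1 hl'), one_mul]]
        exact (sumA k j).symm
      · intro ν hν hne
        rw [coef ν (Nat.one_le_iff_ne_zero.2 hne) (Finset.mem_range.1 hν) k j]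
        ring
      · intro hc; exact absurd (Finset.mem_range.2 hmnat) hc
    have : (m:ℝ) * stmtA m ξ (k+1) (m*j+l) = stmtA m ξ k j := by
      rw [← e1, e2, e3]
    field_simp
    linarith
  have descent : ∀ (d : ℕ) (k : ℤ) (j i : ℕ), i < m^d →
      stmtA m ξ (k + d) (m^d * j + i) = stmtA m ξ k j / (m:ℝ)^(d:ℕ) := by
    intro d
    induction d with
    | zero =>
      intro k j i hi
      have h0' : i = 0 := by
        have : i < 1 := by simpa using hi
        omega
      subst h0'
      simp
    | succ d ih =>
      intro k j i hi
      have hmd : 0 < m^d := pow_pos hmnat d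
      have hlm : i / m^d < m := by
        apply Nat.div_lt_of_lt_mul
        calc i < m^(d+1) := hi
          _ = m^d * m := by rw [pow_succ]
      have hrm : i % m^d < m^d := Nat.mod_lt _ hmd
      have hidx : m^d * (m*j + i / m^d) + i % m^d = m^(d+1) * j + i := by
        have hmod := Nat.div_add_mod i (m^d)
        calc m^d * (m*j + i / m^d) + i % m^d
            = m^(d+1) * j + (m^d * (i / m^d) + i % m^d) := by ring
          _ = m^(d+1) * j + i := by rw [hmod]
      have hexp : (k + 1) + (d:ℤ) = k + ((d:ℕ)+1 : ℕ) := by push_cast; ring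
      have hkey := ih (k+1) (m*j + i / m^d) (i % m^d) hrm
      rw [hidx, hexp] at hkey
      rw [hkey, childavg k j (i / m^d) hlm, div_div]
      congr 1
      rw [pow_succ]
      ring
  have allA : ∀ (k : ℤ) (j : ℕ),
      stmtA m ξ k j = ((m:ℝ)^k)⁻¹ * stmtA m ξ 0 0 := by
    intro k j
    set n : ℕ := k.natAbs + j + 1 with hn
    have hkn : (j:ℤ) + 1 ≤ k + n := by omega
    set d : ℕ := (k + n).toNat with hd
    have hdz : (d:ℤ) = k + n := Int.toNat_of_nonneg (by omega)
    have hjd : j < m^d := by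
      have h1 : j + 1 ≤ d := by omega
      have h2 : d < 2^d := Nat.lt_two_pow_self
      have h3 : 2^d ≤ m^d := Nat.pow_le_pow_left hm d
      omega
    have e1 : stmtA m ξ k j = stmtA m ξ (-(n:ℤ)) 0 / (m:ℝ)^(d:ℕ) := by
      have := descent d (-(n:ℤ)) 0 j hjd
      rw [show (-(n:ℤ) + d) = k by omega] at this
      simpa using this
    have e2 : stmtA m ξ 0 0 = stmtA m ξ (-(n:ℤ)) 0 / (m:ℝ)^(n:ℕ) := by
      have := descent n (-(n:ℤ)) 0 0 (pow_pos hmnat n)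
      rw [show (-(n:ℤ) + n) = 0 by omega] at this
      simpa using this
    rw [e1, e2]
    have hsplit : ((m:ℝ)^(d:ℕ)) = (m:ℝ)^k * (m:ℝ)^(n:ℕ) := by
      rw [← zpow_natCast (m:ℝ) d, ← zpow_natCast (m:ℝ) n, hdz, zpow_add₀ hmne]
    rw [hsplit]
    field_simp
  -- Endgame: Lebesgue differentiation
  have havg : ∀ (k : ℕ) (j : ℕ),
      (⨍ y in Metric.closedBall ((stmtE m k j + stmtE m k (j+1))/2)
        (((m:ℝ)^(k:ℤ))⁻¹/2), (Ici (0:ℝ)).indicator ξ y) = stmtA m ξ 0 0 := by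
    intro k j
    have hl := auxLen m hm k j
    have hball : Metric.closedBall ((stmtE m k j + stmtE m k (j+1))/2) (((m:ℝ)^(k:ℤ))⁻¹/2)
        = Icc (stmtE m (k:ℤ) j) (stmtE m (k:ℤ) (j+1)) := by
      have e1 : (stmtE m k j + stmtE m k (j+1))/2 - ((m:ℝ)^(k:ℤ))⁻¹/2 = stmtE m (k:ℤ) j := by
        linarith
      have e2 : (stmtE m k j + stmtE m k (j+1))/2 + ((m:ℝ)^(k:ℤ))⁻¹/2
          = stmtE m (k:ℤ) (j+1) := by linarith
      rw [Real.closedBall_eq_Icc, e1, e2]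
    rw [hball, setAverage_eq]
    have hIcc : (∫ y in Icc (stmtE m (k:ℤ) j) (stmtE m (k:ℤ) (j+1)),
        (Ici (0:ℝ)).indicator ξ y) = ((m:ℝ)^(k:ℤ))⁻¹ * stmtA m ξ 0 0 := by
      rw [setIntegral_congr_fun measurableSet_Icc
        (fun y hy => indicator_of_mem
          (show y ∈ Ici (0:ℝ) from le_trans (auxEnonneg m hm k j) hy.1) ξ)]
      rw [show (∫ y in Icc (stmtE m (k:ℤ) j) (stmtE m (k:ℤ) (j+1)), ξ y)
          = stmtA m ξ (k:ℤ) j from (setIntegral_congr_set Ioo_ae_eq_Icc).symm]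
      rw [allA (k:ℤ) j]
    rw [hIcc, measureReal_def, Real.volume_Icc, hl,
      ENNReal.toReal_ofReal (le_of_lt (inv_pos.2 (hPz (k:ℤ)))), smul_eq_mul, inv_inv]
    field_simp
  have hfli : LocallyIntegrable ((Ici (0:ℝ)).indicator ξ) volume := by
    rw [MeasureTheory.locallyIntegrable_iff]
    intro K hK
    rw [IntegrableOn, MeasureTheory.integrable_indicator_iff measurableSet_Ici]
    rw [IntegrableOn, Measure.restrict_restrict measurableSet_Ici]
    exact hξ.integrableOn_compact_subset inter_subset_left (hK.inter_left isClosed_Ici)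
  have hae := IsUnifLocDoublingMeasure.ae_tendsto_average
    (μ := (volume : Measure ℝ)) hfli 1
  have key : ∀ᵐ x ∂(volume : Measure ℝ), 0 < x → ξ x = stmtA m ξ 0 0 := by
    filter_upwards [hae] with x hx hxpos
    set jx : ℕ → ℕ := fun k => (⌊(m:ℝ)^k * x⌋).toNat with hjxdef
    have hδlim : Tendsto (fun k : ℕ => ((m:ℝ)^(k:ℤ))⁻¹/2) atTop (𝓝[>] 0) := by
      rw [tendsto_nhdsWithin_iff]
      constructor
      · have h1 : Tendsto (fun k : ℕ => ((m:ℝ)⁻¹)^k) atTop (𝓝 0) :=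
          tendsto_pow_atTop_nhds_zero_of_lt_one (by positivity)
            (by rw [inv_lt_one_iff₀]; right; exact_mod_cast hm.trans_lt' one_lt_two)
        have h2 : Tendsto (fun k : ℕ => ((m:ℝ)^(k:ℤ))⁻¹) atTop (𝓝 0) := by
          convert h1 using 2 with k
          rw [zpow_natCast, inv_pow]
        simpa using h2.div_const 2
      · exact Eventually.of_forall fun k => mem_Ioi.2 (by positivity)
    have hmem : ∀ k : ℕ, x ∈ Metric.closedBall
        ((stmtE m k (jx k) + stmtE m k (jx k + 1))/2) (1 * (((m:ℝ)^(k:ℤ))⁻¹/2)) := by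
      intro k
      have hp : (0:ℝ) < (m:ℝ)^(k:ℕ) := by positivity
      have hzp : (m:ℝ)^((k:ℕ):ℤ) = (m:ℝ)^(k:ℕ) := zpow_natCast _ _
      have h0f : (0:ℤ) ≤ ⌊(m:ℝ)^k * x⌋ := Int.floor_nonneg.2 (by positivity)
      have hcast : ((jx k : ℝ)) = ((⌊(m:ℝ)^k * x⌋ : ℤ) : ℝ) := by
        rw [hjxdef]
        exact_mod_cast congrArg (Int.cast : ℤ → ℝ) (Int.toNat_of_nonneg h0f)
      have hj0 : ((jx k : ℝ)) ≤ (m:ℝ)^k * x := by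
        rw [hcast]; exact Int.floor_le _
      have hj1 : (m:ℝ)^k * x < (jx k : ℝ) + 1 := by
        rw [hcast]; exact Int.lt_floor_add_one _
      have hL : stmtE m k (jx k) ≤ x := by
        unfold stmtE; rw [hzp, div_le_iff₀ hp]; linarith
      have hR : x ≤ stmtE m k (jx k + 1) := by
        unfold stmtE; rw [hzp, le_div_iff₀ hp]; push_cast; linarith
      have hlen := auxLen m hm k (jx k)
      rw [Metric.mem_closedBall, Real.dist_eq, abs_le]
      constructor <;> linarith
    have hx' := hx (fun k : ℕ => (stmtE m k (jx k) + stmtE m k (jx k + 1))/2)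
      (fun k : ℕ => ((m:ℝ)^(k:ℤ))⁻¹/2) hδlim (Eventually.of_forall hmem)
    have hx'' : Tendsto (fun _ : ℕ => stmtA m ξ 0 0) atTop
        (𝓝 ((Ici (0:ℝ)).indicator ξ x)) :=
      Filter.Tendsto.congr (fun k => havg k (jx k)) hx'
    have hfx : (Ici (0:ℝ)).indicator ξ x = stmtA m ξ 0 0 :=
      tendsto_nhds_unique hx'' tendsto_const_nhds
    rw [indicator_of_mem (show x ∈ Ici (0:ℝ) from le_of_lt hxpos)] at hfx
    exact hfx
  refine ⟨stmtA m ξ 0 0, ?_⟩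
  rw [ae_restrict_iff' measurableSet_Ici]
  have h0 : ∀ᵐ x ∂(volume : Measure ℝ), x ∉ ({0} : Set ℝ) :=
    measure_eq_zero_iff_ae_notMem.1 Real.volume_singleton
  filter_upwards [key, h0] with x h1 h2 hxI
  exact h1 (hxI.lt_of_ne (fun hxx => h2 (by simp [← hxx])))
end
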